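/- arXiv:2208.14292 — 4 statements merged into one kernel-verified Lean document; each statement's English description precedes it below -/
import Mathlib

section
/- (Exactness of the ETD3RK/ETD4RK final-step quadrature for quadratic forcing.) Let L be an N×N real matrix, τ > 0, and c₀, c₁, c₂ ∈ ℝ^N; set f(t) = c₀ + c₁ t + c₂ t². Then [2M₃(τ)/τ² − 3M₂(τ)/τ + M₁(τ)]·f(0) − [4M₃(τ)/τ² − 4M₂(τ)/τ]·f(τ/2) + [2M₃(τ)/τ² − M₂(τ)/τ]·f(τ) = M₁(τ)·c₀ + M₂(τ)·c₁ + M₃(τ)·c₂. Consequently the final step of the ETD3RK and ETD4RK schemes reproduces the exact increment ∫₀^τ exp((τ−t)L) f(t) dt whenever the forcing is a quadratic polynomial in t. -/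
attribute [local instance] Matrix.normedAddCommGroup Matrix.normedSpace

/-- `Mmat L n τ = ∫₀^τ exp((τ−t)L) t^(n−1) dt`. -/
noncomputable def Mmat {N : ℕ} (L : Matrix (Fin N) (Fin N) ℝ) (n : ℕ) (τ : ℝ) :
    Matrix (Fin N) (Fin N) ℝ :=
  ∫ t in (0:ℝ)..τ, t ^ (n - 1) • NormedSpace.exp ((τ - t) • L)

section aux

variable {N : ℕ} (L : Matrix (Fin N) (Fin N) ℝ) (τ : ℝ)

lemma contExp : Continuous fun t : ℝ => NormedSpace.exp ((τ - t) • L) := by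
  letI := Matrix.linftyOpNormedRing (n := Fin N) (α := ℝ)
  letI := Matrix.linftyOpNormedAlgebra (R := ℝ) (n := Fin N) (α := ℝ)
  letI := Matrix.linftyOpNormedAlgebra (R := ℚ) (n := Fin N) (α := ℝ)
  haveI : CompleteSpace (Matrix (Fin N) (Fin N) ℝ) := by
    letI := Matrix.linftyOpNormedAddCommGroup (m := Fin N) (n := Fin N) (α := ℝ)
    letI := Matrix.linftyOpNormedSpace (R := ℝ) (m := Fin N) (n := Fin N) (α := ℝ)
    exact FiniteDimensional.complete ℝ _
  have h := @NormedSpace.exp_continuous (Matrix (Fin N) (Fin N) ℝ) _ _ this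
  exact h.comp (((continuous_const.sub continuous_id).smul
    continuous_const))

lemma hInt (k : ℕ) :
    @IntervalIntegrable (Matrix (Fin N) (Fin N) ℝ) _
      (NormedAddCommGroup.toENormedAddCommMonoid (E := Matrix (Fin N) (Fin N) ℝ)).toENormedAddMonoid
      (fun t : ℝ => t ^ k • NormedSpace.exp ((τ - t) • L))
      MeasureTheory.volume 0 τ :=
  ((continuous_pow k).smul (contExp L τ)).intervalIntegrable _ _

/-- `A ↦ A.mulVec c` as a continuous linear map. -/
noncomputable def mvCLM (c : Fin N → ℝ) :
    Matrix (Fin N) (Fin N) ℝ →L[ℝ] (Fin N → ℝ) :=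
  LinearMap.toContinuousLinearMap
    { toFun := fun A => A.mulVec c
      map_add' := fun A B => Matrix.add_mulVec A B c
      map_smul' := fun a A => Matrix.smul_mulVec a A c }

lemma mulVec_Mmat (n : ℕ) (c : Fin N → ℝ) :
    (Mmat L n τ).mulVec c
      = ∫ t in (0:ℝ)..τ, t ^ (n - 1) • (NormedSpace.exp ((τ - t) • L)).mulVec c := by
  have h := (mvCLM (N := N) c).intervalIntegral_comp_comm (hInt L τ (n - 1))
  rw [Mmat]
  have h3 : (∫ t in (0:ℝ)..τ, t ^ (n - 1) • NormedSpace.exp ((τ - t) • L)).mulVec c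
      = ∫ t in (0:ℝ)..τ, (mvCLM (N := N) c) (t ^ (n - 1) • NormedSpace.exp ((τ - t) • L)) :=
    h.symm
  rw [h3]
  congr 1
  funext t
  rw [map_smul]
  rfl

end aux

/-- exactness of the ETD3RK/ETD4RK final-step quadrature for quadratic
forcing: with `f t = c₀ + t c₁ + t² c₂`,
`[2M₃/τ² − 3M₂/τ + M₁]·f(0) − [4M₃/τ² − 4M₂/τ]·f(τ/2) + [2M₃/τ² − M₂/τ]·f(τ)
  = M₁·c₀ + M₂·c₁ + M₃·c₂`,
which is the exact increment `∫₀^τ exp((τ−t)L)·f(t) dt`. -/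
theorem etd3rk4rk_final_quadrature_exact_for_quadratic_forcing
    (N : ℕ) (L : Matrix (Fin N) (Fin N) ℝ) (τ : ℝ) (hτ : 0 < τ)
    (c₀ c₁ c₂ : Fin N → ℝ) (f : ℝ → Fin N → ℝ)
    (hf : f = fun t => c₀ + t • c₁ + t ^ 2 • c₂) :
    ((2 / τ ^ 2) • Mmat L 3 τ - (3 / τ) • Mmat L 2 τ + Mmat L 1 τ).mulVec (f 0)
      - ((4 / τ ^ 2) • Mmat L 3 τ - (4 / τ) • Mmat L 2 τ).mulVec (f (τ / 2))
      + ((2 / τ ^ 2) • Mmat L 3 τ - (1 / τ) • Mmat L 2 τ).mulVec (f τ)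
    = (Mmat L 1 τ).mulVec c₀ + (Mmat L 2 τ).mulVec c₁ + (Mmat L 3 τ).mulVec c₂
    ∧ (Mmat L 1 τ).mulVec c₀ + (Mmat L 2 τ).mulVec c₁ + (Mmat L 3 τ).mulVec c₂
      = ∫ t in (0:ℝ)..τ, (NormedSpace.exp ((τ - t) • L)).mulVec (f t) := by
  have hτ0 : τ ≠ 0 := ne_of_gt hτ
  constructor
  · subst hf
    simp only [Matrix.sub_mulVec, Matrix.add_mulVec, Matrix.smul_mulVec,
      Matrix.mulVec_add, Matrix.mulVec_smul]
    match_scalars <;> field_simp <;> ring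
  · subst hf
    have hE := contExp L τ
    have hint : ∀ (k : ℕ) (c : Fin N → ℝ),
        IntervalIntegrable (fun t : ℝ => t ^ k • (NormedSpace.exp ((τ - t) • L)).mulVec c)
          MeasureTheory.volume 0 τ := fun k c =>
      ((continuous_pow k).smul ((mvCLM (N := N) c).continuous.comp hE)).intervalIntegrable _ _
    have h0 : ∀ t : ℝ, (NormedSpace.exp ((τ - t) • L)).mulVec (c₀ + t • c₁ + t ^ 2 • c₂)
        = t ^ 0 • (NormedSpace.exp ((τ - t) • L)).mulVec c₀
          + t ^ 1 • (NormedSpace.exp ((τ - t) • L)).mulVec c₁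
          + t ^ 2 • (NormedSpace.exp ((τ - t) • L)).mulVec c₂ := by
      intro t
      simp [Matrix.mulVec_add, Matrix.mulVec_smul]
    rw [mulVec_Mmat, mulVec_Mmat, mulVec_Mmat]
    simp only [h0]
    rw [intervalIntegral.integral_add ((hint 0 c₀).add (hint 1 c₁)) (hint 2 c₂),
      intervalIntegral.integral_add (hint 0 c₀) (hint 1 c₁)]
end

section
/- Let L be an invertible N×N real matrix and τ > 0. Then 2M₃(τ)/τ² − 3M₂(τ)/τ + M₁(τ) = τ⁻² L⁻³ · (−4I − τL + exp(τL)·(4I − 3τL + τ²L²)). This identifies the coefficient of f(u(t),t) in the final step of the ETD3RK and ETD4RK schemes of Cox and Matthews with its form in terms of the matrices M₁, M₂, M₃. -/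
set_option maxHeartbeats 1000000
open NormedSpace

section LinftyAux
attribute [local instance] Matrix.linftyOpNormedRing Matrix.linftyOpNormedAlgebra

lemma commute_exp_aux {N : ℕ} {A C : Matrix (Fin N) (Fin N) ℝ} (h : Commute A C) :
    Commute A (exp C) := h.exp_right

lemma exp_entry_bound {N : ℕ} (L : Matrix (Fin N) (Fin N) ℝ) (t : ℝ) {ε : ℝ} (hε : 0 < ε) :
    ∀ᶠ u in nhds t, ∀ i j,
      |(exp (u • L) - exp (t • L) - (u - t) • (exp (t • L) * L)) i j| ≤ ε * |u - t| := by
  have h := hasDerivAt_exp_smul_const (𝕂 := ℝ) L t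
  rw [hasDerivAt_iff_isLittleO, Asymptotics.isLittleO_iff] at h
  filter_upwards [h hε] with u hu i j
  refine le_trans ?_ (le_trans hu (by rw [Real.norm_eq_abs]))
  have hentry : ∀ (A : Matrix (Fin N) (Fin N) ℝ) i j, |A i j| ≤ ‖A‖ := by
    intro A i j
    rw [← Real.norm_eq_abs, ← coe_nnnorm, ← coe_nnnorm A, NNReal.coe_le_coe,
      Matrix.linfty_opNNNorm_def]
    exact le_trans (Finset.single_le_sum (f := fun j => ‖A i j‖₊) (fun _ _ => zero_le')
      (Finset.mem_univ j)) (Finset.le_sup (f := fun i => ∑ j, ‖A i j‖₊) (Finset.mem_univ i))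
  exact hentry _ i j

end LinftyAux


attribute [local instance] Matrix.normedAddCommGroup Matrix.normedSpace

section Aux
variable {N : ℕ}

lemma hasDerivAt_exp_smul (L : Matrix (Fin N) (Fin N) ℝ) (t : ℝ) :
    HasDerivAt (fun u : ℝ => exp (u • L)) (exp (t • L) * L) t := by
  refine hasDerivAt_iff_isLittleO.2 ?_
  rw [Asymptotics.isLittleO_iff]
  intro c hc
  filter_upwards [exp_entry_bound L t hc] with u hu
  rw [Real.norm_eq_abs]
  refine (Matrix.norm_le_iff (by positivity)).2 fun i j => ?_
  simpa using hu i j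

lemma HasDerivAt.constMulM (c : Matrix (Fin N) (Fin N) ℝ) {f : ℝ → Matrix (Fin N) (Fin N) ℝ}
    {f' : Matrix (Fin N) (Fin N) ℝ} {t : ℝ} (hf : HasDerivAt f f' t) :
    HasDerivAt (fun t => c * f t) (c * f') t := by
  have hc := (LinearMap.mulLeft ℝ c).toContinuousLinearMap.hasFDerivAt (x := f t)
  have := (hc.comp t hf.hasFDerivAt).hasDerivAt
  refine HasDerivAt.congr_deriv this ?_
  change c * ((1:ℝ) • f') = c * f'
  rw [one_smul]

lemma hasDerivAt_E (L : Matrix (Fin N) (Fin N) ℝ) (τ t : ℝ) :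
    HasDerivAt (fun t : ℝ => exp ((τ - t) • L)) (-(L * exp ((τ - t) • L))) t := by
  have h1 : HasDerivAt (fun t : ℝ => τ - t) (-1) t := by
    simpa using (hasDerivAt_id t).const_sub τ
  have h3 := (hasDerivAt_exp_smul L (τ - t)).scomp t h1
  have hcomm : exp ((τ - t) • L) * L = L * exp ((τ - t) • L) :=
    ((commute_exp_aux (((Commute.refl L).smul_right (τ - t)))).symm.eq)
  simp only [Function.comp_def] at h3
  refine HasDerivAt.congr_deriv h3 ?_
  rw [hcomm]
  simp

lemma contE (L : Matrix (Fin N) (Fin N) ℝ) (τ : ℝ) :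
    Continuous (fun t : ℝ => exp ((τ - t) • L)) :=
  continuous_iff_continuousAt.2 fun t => (hasDerivAt_E L τ t).continuousAt

variable (L B : Matrix (Fin N) (Fin N) ℝ) (τ : ℝ) (hB : B * L = 1)

include hB in
lemma hBL : ∀ X : Matrix (Fin N) (Fin N) ℝ, B * (L * X) = X := fun X => by
  rw [← mul_assoc, hB, one_mul]

include hB in
lemma M1_eq : Mmat L 1 τ = B * exp (τ • L) - B := by
  have key : ∫ t in (0:ℝ)..τ, t ^ 0 • exp ((τ - t) • L)
      = -(B * exp ((τ - τ) • L)) - -(B * exp ((τ - (0:ℝ)) • L)) := by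
    refine intervalIntegral.integral_eq_sub_of_hasDerivAt
      (f := fun t : ℝ => -(B * exp ((τ - t) • L))) (fun t _ => ?_)
      (((continuous_pow 0).smul (contE L τ)).intervalIntegrable 0 τ)
    have h := ((hasDerivAt_E L τ t).constMulM B).neg
    convert h using 1
    · funext s; simp
    rw [mul_neg, neg_neg, ← mul_assoc, hB, one_mul, pow_zero, one_smul]
  simp only [sub_self, sub_zero, zero_smul, exp_zero, mul_one, pow_zero, one_smul] at key
  simp only [Mmat]
  norm_num
  rw [key]
  abel

include hB in
lemma M2_eq : Mmat L 2 τ = B * B * exp (τ • L) - τ • B - B * B := by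
  have key : ∫ t in (0:ℝ)..τ, t ^ 1 • exp ((τ - t) • L)
      = (-(τ • (B * exp ((τ - τ) • L))) - B * B * exp ((τ - τ) • L))
        - (-((0:ℝ) • (B * exp ((τ - (0:ℝ)) • L))) - B * B * exp ((τ - (0:ℝ)) • L)) := by
    refine intervalIntegral.integral_eq_sub_of_hasDerivAt
      (f := fun t : ℝ => -(t • (B * exp ((τ - t) • L))) - B * B * exp ((τ - t) • L))
      (fun t _ => ?_)
      (((continuous_pow 1).smul (contE L τ)).intervalIntegrable 0 τ)
    have h1 := ((hasDerivAt_id t).smul ((hasDerivAt_E L τ t).constMulM B)).neg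
    have h2 := (hasDerivAt_E L τ t).constMulM (B * B)
    have h := h1.sub h2
    convert h using 1
    · funext s; simp [mul_assoc]
    simp only [mul_neg, hBL L B hB, mul_assoc, smul_neg, one_smul, pow_one, id_eq]
    abel
  simp only [sub_self, sub_zero, zero_smul, exp_zero, mul_one, neg_zero, zero_sub, neg_neg, pow_one] at key
  simp only [Mmat]
  norm_num
  rw [key]
  abel

include hB in
lemma M3_eq : Mmat L 3 τ
    = (2:ℝ) • (B * B * B * exp (τ • L)) - τ ^ 2 • B - (2 * τ) • (B * B)
      - (2:ℝ) • (B * B * B) := by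
  have key : ∫ t in (0:ℝ)..τ, t ^ 2 • exp ((τ - t) • L)
      = ((-(τ ^ 2 • (B * exp ((τ - τ) • L))) - (2 * τ) • (B * B * exp ((τ - τ) • L)))
          - (2:ℝ) • (B * B * B * exp ((τ - τ) • L)))
        - ((-((0:ℝ) ^ 2 • (B * exp ((τ - (0:ℝ)) • L)))
            - (2 * (0:ℝ)) • (B * B * exp ((τ - (0:ℝ)) • L)))
          - (2:ℝ) • (B * B * B * exp ((τ - (0:ℝ)) • L))) := by
    refine intervalIntegral.integral_eq_sub_of_hasDerivAt
      (f := fun t : ℝ => (-(t ^ 2 • (B * exp ((τ - t) • L)))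
        - (2 * t) • (B * B * exp ((τ - t) • L)))
        - (2:ℝ) • (B * B * B * exp ((τ - t) • L)))
      (fun t _ => ?_)
      (((continuous_pow 2).smul (contE L τ)).intervalIntegrable 0 τ)
    have h1 := ((hasDerivAt_pow 2 t).smul ((hasDerivAt_E L τ t).constMulM B)).neg
    have h2 := ((hasDerivAt_id t).const_mul (2:ℝ)).smul
      ((hasDerivAt_E L τ t).constMulM (B * B))
    have h3 := ((hasDerivAt_E L τ t).constMulM (B * B * B)).const_smul (2:ℝ)
    have h := (h1.sub h2).sub h3
    convert h using 1
    · funext s; simp [mul_assoc]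
    norm_num [mul_neg, hBL L B hB, mul_assoc, smul_neg, one_smul, pow_one, id_eq,
      Nat.cast_ofNat, mul_one, smul_smul]
  norm_num [sub_self, sub_zero, zero_smul, exp_zero, mul_one, neg_zero, zero_sub, neg_neg,
    mul_zero] at key
  simp only [Mmat]
  norm_num
  rw [key]
  abel

end Aux

/-- for invertible `L` and `τ > 0`,
`2M₃/τ² − 3M₂/τ + M₁ = τ⁻² L⁻³ (−4I − τL + exp(τL)(4I − 3τL + τ²L²))`
(the coefficient of `f(u(t),t)` in the final step of ETD3RK and ETD4RK). -/
theorem etd_coeff_f_u_t (N : ℕ) (L : Matrix (Fin N) (Fin N) ℝ) (hL : IsUnit L)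
    (τ : ℝ) (hτ : 0 < τ) :
    (2 / τ ^ 2) • Mmat L 3 τ - (3 / τ) • Mmat L 2 τ + Mmat L 1 τ
      = (τ ^ 2)⁻¹ • (L⁻¹ ^ 3
        * (-(4 : ℝ) • (1 : Matrix (Fin N) (Fin N) ℝ) - τ • L
          + NormedSpace.exp (τ • L)
            * ((4 : ℝ) • (1 : Matrix (Fin N) (Fin N) ℝ) - (3 * τ) • L + τ ^ 2 • L ^ 2))) := by
  set B := L⁻¹ with hBdef
  have hdet : IsUnit L.det := (Matrix.isUnit_iff_isUnit_det L).1 hL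
  have hB : B * L = 1 := Matrix.nonsing_inv_mul L hdet
  have hB' : L * B = 1 := Matrix.mul_nonsing_inv L hdet
  have hτ' : τ ≠ 0 := ne_of_gt hτ
  set Ex := exp (τ • L) with hExdef
  have hExL : Ex * L = L * Ex :=
    ((commute_exp_aux (((Commute.refl L).smul_right τ))).symm.eq)
  have hBLcomm : Commute B L := hB.trans hB'.symm
  have hExB : B * Ex = Ex * B := (commute_exp_aux (hBLcomm.smul_right τ)).eq
  have hRHS : L⁻¹ ^ 3
        * (-(4 : ℝ) • (1 : Matrix (Fin N) (Fin N) ℝ) - τ • L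
          + Ex * ((4 : ℝ) • (1 : Matrix (Fin N) (Fin N) ℝ) - (3 * τ) • L + τ ^ 2 • L ^ 2))
      = (-4 : ℝ) • (B * B * B) - τ • (B * B) + (4:ℝ) • (B * B * B * Ex)
        - (3 * τ) • (B * B * Ex) + τ ^ 2 • (B * Ex) := by
    have hp : L⁻¹ ^ 3 = B * B * B := by rw [pow_succ, pow_two]
    have hExL2 : ∀ X, Ex * (L * X) = L * (Ex * X) := fun X => by
      rw [← mul_assoc, hExL, mul_assoc]
    rw [hp]
    simp only [mul_add, mul_sub, mul_smul_comm, mul_one, pow_two, mul_assoc, hExL, hExL2,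
      hBL L B hB, hB]
    abel
  rw [M1_eq L B τ hB, M2_eq L B τ hB, M3_eq L B τ hB, hRHS]
  match_scalars <;> field_simp <;> ring
end

section
/- Let L be an invertible N×N real matrix and τ > 0. Then 4M₂(τ)/τ − 4M₃(τ)/τ² = 4 τ⁻² L⁻³ · (2I + τL + exp(τL)·(τL − 2I)). This identifies the coefficient of the midpoint stage value in the final step of the ETD3RK and ETD4RK schemes of Cox and Matthews with its form in terms of the matrices M₂, M₃. -/
attribute [local instance] Matrix.normedAddCommGroup Matrix.normedSpace

/-- Type synonym carrying the `linftyOp` normed ring structure. -/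
def MA (N : ℕ) : Type := Matrix (Fin N) (Fin N) ℝ

noncomputable instance (N : ℕ) : NormedRing (MA N) := Matrix.linftyOpNormedRing
noncomputable instance (N : ℕ) : NormedAlgebra ℝ (MA N) := Matrix.linftyOpNormedAlgebra

/-- the identity, as a linear equiv between the two normed structures -/
noncomputable def eL (N : ℕ) : MA N ≃ₗ[ℝ] Matrix (Fin N) (Fin N) ℝ where
  toFun x := x
  invFun x := x
  map_add' _ _ := rfl
  map_smul' _ _ := rfl
  left_inv _ := rfl
  right_inv _ := rfl

instance (N : ℕ) : FiniteDimensional ℝ (MA N) := Module.Finite.equiv (eL N).symm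

instance (N : ℕ) : CompleteSpace (MA N) := FiniteDimensional.complete ℝ _

noncomputable def eC (N : ℕ) : MA N ≃L[ℝ] Matrix (Fin N) (Fin N) ℝ :=
  (eL N).toContinuousLinearEquiv

@[simp] lemma eC_apply {N : ℕ} (x : MA N) : eC N x = x := rfl

lemma exp_transfer {N : ℕ} (x : MA N) :
    (NormedSpace.exp x : Matrix (Fin N) (Fin N) ℝ) = NormedSpace.exp (eC N x) := by
  have h1 : (NormedSpace.exp x : MA N) = ∑' n : ℕ, (((n.factorial : ℝ))⁻¹) • x ^ n := by
    rw [NormedSpace.exp_eq_tsum ℝ]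
  have h2 : (NormedSpace.exp (eC N x) : Matrix (Fin N) (Fin N) ℝ)
      = ∑' n : ℕ, (((n.factorial : ℝ))⁻¹) • (eC N x) ^ n := by
    rw [NormedSpace.exp_eq_tsum ℝ]
  have h3 := ((eC N).toContinuousLinearMap.map_tsum
    (NormedSpace.expSeries_summable' (𝕂 := ℝ) x))
  calc (NormedSpace.exp x : Matrix (Fin N) (Fin N) ℝ)
      = eC N (∑' n : ℕ, (((n.factorial : ℝ))⁻¹) • x ^ n) := by rw [← h1]; rfl
    _ = ∑' n : ℕ, eC N ((((n.factorial : ℝ))⁻¹) • x ^ n) := h3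
    _ = ∑' n : ℕ, (((n.factorial : ℝ))⁻¹) • (eC N x) ^ n := rfl
    _ = NormedSpace.exp (eC N x) := h2.symm

lemma cont_aux {N : ℕ} (A : MA N) (τ : ℝ) (k : ℕ) :
    Continuous fun t : ℝ => t ^ k • NormedSpace.exp ((τ - t) • A) :=
  (continuous_pow k).smul ((continuous_iff_continuousAt.2 fun x => (NormedSpace.exp_analytic (𝕂 := ℝ) x).continuousAt).comp
    ((continuous_const.sub continuous_id).smul continuous_const))

lemma deriv_exp_aux {N : ℕ} (A : MA N) (τ t : ℝ) :
    HasDerivAt (fun t : ℝ => NormedSpace.exp ((τ - t) • A))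
      ((-1 : ℝ) • (NormedSpace.exp ((τ - t) • A) * A)) t := by
  have h1 : HasDerivAt (fun t : ℝ => (τ - t)) (-1) t := (hasDerivAt_id t).const_sub τ
  exact (hasDerivAt_exp_smul_const A (τ - t)).scomp t h1

lemma int2 {N : ℕ} (A B : MA N) (hAB : A * B = 1) (τ : ℝ) :
    ∫ t in (0:ℝ)..τ, t • NormedSpace.exp ((τ - t) • A)
      = NormedSpace.exp (τ • A) * (B * B) - τ • B - B * B := by
  have key : ∀ t ∈ Set.uIcc (0:ℝ) τ,
      HasDerivAt (fun t => -(NormedSpace.exp ((τ - t) • A) * (t • B + B * B)))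
        (t • NormedSpace.exp ((τ - t) • A)) t := by
    intro t _
    have h3 : HasDerivAt (fun t : ℝ => t • B + B * B) ((1:ℝ) • B) t :=
      ((hasDerivAt_id t).smul_const B).add_const (B * B)
    have h4 := ((deriv_exp_aux A τ t).mul h3).neg
    convert h4 using 1
    · rfl
    · rfl
    set E := NormedSpace.exp ((τ - t) • A) with hE
    have e1 : A * (t • B + B * B) = t • (1 : MA N) + B := by
      rw [mul_add, mul_smul_comm, hAB, ← mul_assoc, hAB, one_mul]
    rw [one_smul, smul_mul_assoc, neg_one_smul, mul_assoc, e1, mul_add,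
      mul_smul_comm, mul_one]
    abel
  have hint : IntervalIntegrable (fun t : ℝ => t • NormedSpace.exp ((τ - t) • A))
      MeasureTheory.volume 0 τ := by
    have := (cont_aux A τ 1).intervalIntegrable (μ := MeasureTheory.volume) 0 τ
    simpa using this
  have h := intervalIntegral.integral_eq_sub_of_hasDerivAt key hint
  rw [h]
  simp [NormedSpace.exp_zero]
  abel

lemma int3 {N : ℕ} (A B : MA N) (hAB : A * B = 1) (τ : ℝ) :
    ∫ t in (0:ℝ)..τ, t ^ 2 • NormedSpace.exp ((τ - t) • A)
      = (2:ℝ) • (NormedSpace.exp (τ • A) * (B * (B * B)))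
        - τ ^ 2 • B - (2 * τ) • (B * B) - (2:ℝ) • (B * (B * B)) := by
  have key : ∀ t ∈ Set.uIcc (0:ℝ) τ,
      HasDerivAt (fun t => -(NormedSpace.exp ((τ - t) • A)
          * (t ^ 2 • B + (2 * t) • (B * B) + (2:ℝ) • (B * (B * B)))))
        (t ^ 2 • NormedSpace.exp ((τ - t) • A)) t := by
    intro t _
    have h3 : HasDerivAt (fun t : ℝ => t ^ 2 • B + (2 * t) • (B * B) + (2:ℝ) • (B * (B * B)))
        ((2 * t) • B + (2:ℝ) • (B * B)) t := by
      have ha : HasDerivAt (fun t : ℝ => t ^ 2 • B) ((2 * t) • B) t := by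
        simpa using (hasDerivAt_pow 2 t).smul_const B
      have hb : HasDerivAt (fun t : ℝ => (2 * t) • (B * B)) ((2:ℝ) • (B * B)) t := by
        simpa using (((hasDerivAt_id t).const_mul 2).smul_const (B * B))
      exact (ha.add hb).add_const _
    have h4 := ((deriv_exp_aux A τ t).mul h3).neg
    convert h4 using 1
    · rfl
    · rfl
    set E := NormedSpace.exp ((τ - t) • A) with hE
    have e1 : A * (t ^ 2 • B + (2 * t) • (B * B) + (2:ℝ) • (B * (B * B)))
        = t ^ 2 • (1 : MA N) + (2 * t) • B + (2:ℝ) • (B * B) := by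
      rw [mul_add, mul_add, mul_smul_comm, mul_smul_comm, mul_smul_comm, hAB,
        ← mul_assoc, hAB, one_mul, ← mul_assoc, hAB, one_mul]
    rw [smul_mul_assoc, neg_one_smul, mul_assoc, e1]
    rw [mul_add, mul_add, mul_add, mul_smul_comm, mul_one, mul_smul_comm, mul_smul_comm]
    abel
  have hint : IntervalIntegrable (fun t : ℝ => t ^ 2 • NormedSpace.exp ((τ - t) • A))
      MeasureTheory.volume 0 τ := (cont_aux A τ 2).intervalIntegrable 0 τ
  have h := intervalIntegral.integral_eq_sub_of_hasDerivAt key hint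
  rw [h]
  simp [NormedSpace.exp_zero]
  abel

lemma exp_transfer' {N : ℕ} (x : MA N) :
    eC N (NormedSpace.exp x) = NormedSpace.exp (eC N x) := by
  rw [eC_apply]; exact exp_transfer x

@[simp] lemma eC_mul {N : ℕ} (x y : MA N) : eC N (x * y) = eC N x * eC N y := rfl

lemma transfer_int2 {N : ℕ} (A B : MA N) (hAB : A * B = 1) (τ : ℝ) :
    (∫ t in (0:ℝ)..τ, t ^ 1 • NormedSpace.exp ((τ - t) • eC N A))
      = NormedSpace.exp (τ • eC N A) * (eC N B * eC N B) - τ • eC N B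
        - eC N B * eC N B := by
  have h1 : ∀ t : ℝ, t ^ 1 • NormedSpace.exp ((τ - t) • eC N A)
      = eC N (t • NormedSpace.exp ((τ - t) • A)) := by
    intro t
    rw [pow_one, map_smul, exp_transfer', map_smul]
  have hint : IntervalIntegrable (fun t : ℝ => t • NormedSpace.exp ((τ - t) • A))
      MeasureTheory.volume 0 τ := by
    simpa using (cont_aux A τ 1).intervalIntegrable (μ := MeasureTheory.volume) 0 τ
  have h2 := ((eC N).toContinuousLinearMap).intervalIntegral_comp_comm hint
  calc (∫ t in (0:ℝ)..τ, t ^ 1 • NormedSpace.exp ((τ - t) • eC N A))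
      = ∫ t in (0:ℝ)..τ, eC N (t • NormedSpace.exp ((τ - t) • A)) := by
        simp only [h1]
    _ = eC N (∫ t in (0:ℝ)..τ, t • NormedSpace.exp ((τ - t) • A)) := h2
    _ = _ := by
        rw [int2 A B hAB τ]
        simp only [map_sub, map_smul, eC_mul, exp_transfer']

lemma transfer_int3 {N : ℕ} (A B : MA N) (hAB : A * B = 1) (τ : ℝ) :
    (∫ t in (0:ℝ)..τ, t ^ 2 • NormedSpace.exp ((τ - t) • eC N A))
      = (2:ℝ) • (NormedSpace.exp (τ • eC N A) * (eC N B * (eC N B * eC N B)))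
        - τ ^ 2 • eC N B - (2 * τ) • (eC N B * eC N B)
        - (2:ℝ) • (eC N B * (eC N B * eC N B)) := by
  have h1 : ∀ t : ℝ, t ^ 2 • NormedSpace.exp ((τ - t) • eC N A)
      = eC N (t ^ 2 • NormedSpace.exp ((τ - t) • A)) := by
    intro t
    rw [map_smul, exp_transfer', map_smul]
  have hint : IntervalIntegrable (fun t : ℝ => t ^ 2 • NormedSpace.exp ((τ - t) • A))
      MeasureTheory.volume 0 τ := (cont_aux A τ 2).intervalIntegrable 0 τ
  have h2 := ((eC N).toContinuousLinearMap).intervalIntegral_comp_comm hint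
  calc (∫ t in (0:ℝ)..τ, t ^ 2 • NormedSpace.exp ((τ - t) • eC N A))
      = ∫ t in (0:ℝ)..τ, eC N (t ^ 2 • NormedSpace.exp ((τ - t) • A)) := by
        simp only [h1]
    _ = eC N (∫ t in (0:ℝ)..τ, t ^ 2 • NormedSpace.exp ((τ - t) • A)) := h2
    _ = _ := by
        rw [int3 A B hAB τ]
        simp only [map_sub, map_smul, eC_mul, exp_transfer']

/-- for invertible `L` and `τ > 0`,
`4M₂/τ − 4M₃/τ² = 4 τ⁻² L⁻³ (2I + τL + exp(τL)(τL − 2I))`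
(the coefficient of the midpoint stage value in the final step of ETD3RK/ETD4RK). -/
theorem etd_coeff_midpoint (N : ℕ) (L : Matrix (Fin N) (Fin N) ℝ) (hL : IsUnit L)
    (τ : ℝ) (hτ : 0 < τ) :
    (4 / τ) • Mmat L 2 τ - (4 / τ ^ 2) • Mmat L 3 τ
      = (4 * (τ ^ 2)⁻¹) • (L⁻¹ ^ 3
        * ((2 : ℝ) • (1 : Matrix (Fin N) (Fin N) ℝ) + τ • L
          + NormedSpace.exp (τ • L)
            * (τ • L - (2 : ℝ) • (1 : Matrix (Fin N) (Fin N) ℝ)))) := by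
  have hd : IsUnit L.det := (Matrix.isUnit_iff_isUnit_det L).mp hL
  have hAB : L * L⁻¹ = 1 := L.mul_nonsing_inv hd
  have hBA : L⁻¹ * L = 1 := L.nonsing_inv_mul hd
  have hM2 : Mmat L 2 τ
      = NormedSpace.exp (τ • L) * (L⁻¹ * L⁻¹) - τ • L⁻¹ - L⁻¹ * L⁻¹ := by
    have h := transfer_int2 (N := N) L (L⁻¹ : Matrix (Fin N) (Fin N) ℝ) hAB τ
    change (∫ t in (0:ℝ)..τ, t ^ 1 • NormedSpace.exp ((τ - t) • L)) = NormedSpace.exp (τ • L) * (L⁻¹ * L⁻¹) - τ • L⁻¹ - L⁻¹ * L⁻¹ at h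
    simpa [Mmat] using h
  have hM3 : Mmat L 3 τ
      = (2:ℝ) • (NormedSpace.exp (τ • L) * (L⁻¹ * (L⁻¹ * L⁻¹)))
        - τ ^ 2 • L⁻¹ - (2 * τ) • (L⁻¹ * L⁻¹) - (2:ℝ) • (L⁻¹ * (L⁻¹ * L⁻¹)) := by
    have h := transfer_int3 (N := N) L (L⁻¹ : Matrix (Fin N) (Fin N) ℝ) hAB τ
    change (∫ t in (0:ℝ)..τ, t ^ 2 • NormedSpace.exp ((τ - t) • L)) = (2:ℝ) • (NormedSpace.exp (τ • L) * (L⁻¹ * (L⁻¹ * L⁻¹))) - τ ^ 2 • L⁻¹ - (2 * τ) • (L⁻¹ * L⁻¹) - (2:ℝ) • (L⁻¹ * (L⁻¹ * L⁻¹)) at h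
    simpa [Mmat] using h
  rw [hM2, hM3]
  set E := NormedSpace.exp (τ • L) with hEdef
  have hc : Commute L⁻¹ E := by
    have h0 : Commute L⁻¹ L := hBA.trans hAB.symm
    exact (h0.smul_right τ).exp_right
  have hcomm : ∀ X : Matrix (Fin N) (Fin N) ℝ, L⁻¹ * (E * X) = E * (L⁻¹ * X) := by
    intro X; rw [← mul_assoc, hc.eq, mul_assoc]
  have hpow : (L⁻¹ : Matrix (Fin N) (Fin N) ℝ) ^ 3 = L⁻¹ * (L⁻¹ * L⁻¹) := by
    rw [pow_succ, pow_two, mul_assoc]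
  rw [hpow]
  simp only [mul_add, mul_sub, smul_add, smul_sub, sub_smul, add_smul, smul_smul,
    mul_smul_comm, smul_mul_assoc, mul_one, one_mul, mul_assoc, hcomm, hc.eq, hBA]
  match_scalars <;> field_simp <;> ring
end

section
/- (Local error of the ETD2RK scheme.) Let λ ∈ ℝ, u₀ ∈ ℝ, and let f : ℝ → ℝ be three times continuously differentiable. Let u(τ) denote the exact solution at time τ of u' = λu + f(t), u(0) = u₀, and let u_sch(τ) = a(τ) + τ⁻¹ m₂(τ)(f(τ) − f(0)) with a(τ) = e^{λτ} u₀ + m₁(τ) f(0), m₁(τ) = ∫₀^τ e^{λ(τ−t)} dt, m₂(τ) = ∫₀^τ e^{λ(τ−t)} t dt denote the result of one ETD2RK step of size τ. Then lim_{τ → 0⁺} (u(τ) − u_sch(τ)) / τ³ = −f''(0)/12, i.e. the one-step error of ETD2RK is −τ³ f̈/12 to leading order. -/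
open Filter Set intervalIntegral

lemma aux_deriv_facts (f : ℝ → ℝ) (hf : ContDiff ℝ 3 f) :
    Differentiable ℝ f ∧ ContDiff ℝ 2 (deriv f) := by
  have h := (contDiff_succ_iff_deriv.mp (show ContDiff ℝ (2+1) f by norm_num [hf]))
  exact ⟨h.1, h.2.2⟩

lemma lemA (f : ℝ → ℝ) (hf : ContDiff ℝ 3 f) :
    Filter.Tendsto (fun h : ℝ => (f h - f 0 - deriv f 0 * h) / h ^ 2)
      (nhdsWithin 0 (Set.Ioi 0)) (nhds (deriv (deriv f) 0 / 2)) := by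
  obtain ⟨hd1, hf1⟩ := aux_deriv_facts f hf
  have hd2 : Differentiable ℝ (deriv f) := hf1.differentiable (by norm_num)
  apply HasDerivAt.lhopital_zero_nhdsGT
    (f' := fun x => deriv f x - deriv f 0) (g' := fun x => 2 * x)
  · filter_upwards with x
    have := ((hd1 x).hasDerivAt.sub_const (f 0)).sub ((hasDerivAt_id x).const_mul (deriv f 0))
    simp only [mul_one] at this
    exact this
  · filter_upwards with x
    simpa using (hasDerivAt_pow 2 x)
  · filter_upwards [self_mem_nhdsWithin] with x (hx : x ∈ Set.Ioi 0)
    exact mul_ne_zero two_ne_zero (ne_of_gt hx)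
  · have : Continuous fun h : ℝ => f h - f 0 - deriv f 0 * h := by
      have := hf.continuous; fun_prop
    have := this.tendsto 0
    simp only [mul_zero, sub_zero, sub_self] at this
    exact this.mono_left nhdsWithin_le_nhds
  · have : Filter.Tendsto (fun h : ℝ => h ^ 2) (nhds 0) (nhds 0) := by
      simpa using (continuous_pow 2).tendsto (0:ℝ)
    exact this.mono_left nhdsWithin_le_nhds
  · have hslope := hasDerivAt_iff_tendsto_slope.mp (hd2 0).hasDerivAt
    have h2 : Filter.Tendsto (slope (deriv f) 0) (nhdsWithin 0 (Set.Ioi 0))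
        (nhds (deriv (deriv f) 0)) :=
      hslope.mono_left (nhdsWithin_mono _ (fun x hx => ne_of_gt hx))
    have := h2.div_const 2
    apply this.congr'
    filter_upwards [self_mem_nhdsWithin] with x (hx : x ∈ Set.Ioi 0)
    have hx0 : x ≠ 0 := ne_of_gt hx
    rw [slope_def_field, sub_zero, div_div]
    ring_nf

lemma lemR (f : ℝ → ℝ) (hf : ContDiff ℝ 3 f) (M : ℝ)
    (hM : ∀ x ∈ Set.Icc (0:ℝ) 1, |deriv (deriv f) x| ≤ M) :
    ∀ x ∈ Set.Icc (0:ℝ) 1, |f x - f 0 - deriv f 0 * x| ≤ M * x ^ 2 := by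
  obtain ⟨hd1, hf1⟩ := aux_deriv_facts f hf
  have hd2 : Differentiable ℝ (deriv f) := hf1.differentiable (by norm_num)
  have hM0 : 0 ≤ M := le_trans (abs_nonneg _) (hM 0 (by norm_num))
  have h1 : ∀ y ∈ Set.Icc (0:ℝ) 1, |deriv f y - deriv f 0| ≤ M * y := by
    intro y hy
    have := Convex.norm_image_sub_le_of_norm_deriv_le (f := deriv f) (s := Set.Icc (0:ℝ) 1)
      (C := M) (x := 0) (y := y) (fun z _ => hd2 z) hM (convex_Icc 0 1)
      (Set.mem_Icc.mpr ⟨le_refl 0, zero_le_one⟩) hy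
    simpa [abs_of_nonneg hy.1] using this
  intro x hx
  have hftc : ∫ y in (0:ℝ)..x, deriv f y = f x - f 0 :=
    intervalIntegral.integral_deriv_eq_sub (fun y _ => hd1 y)
      (hf1.continuous.intervalIntegrable 0 x)
  have hconst : ∫ _ in (0:ℝ)..x, deriv f 0 = deriv f 0 * x := by
    simp [mul_comm]
  have hsub : f x - f 0 - deriv f 0 * x = ∫ y in (0:ℝ)..x, (deriv f y - deriv f 0) := by
    rw [intervalIntegral.integral_sub (hf1.continuous.intervalIntegrable 0 x)
      (intervalIntegrable_const), hftc, hconst]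
  rw [hsub]
  have hb : ∀ y ∈ Set.uIoc (0:ℝ) x, ‖deriv f y - deriv f 0‖ ≤ M * x := by
    intro y hy
    rw [Set.uIoc_of_le hx.1] at hy
    have hy1 : y ∈ Set.Icc (0:ℝ) 1 := ⟨le_of_lt hy.1, le_trans hy.2 hx.2⟩
    calc ‖deriv f y - deriv f 0‖ ≤ M * y := h1 y hy1
    _ ≤ M * x := by nlinarith [hy.2]
  have := intervalIntegral.norm_integral_le_of_norm_le_const hb
  calc |∫ y in (0:ℝ)..x, (deriv f y - deriv f 0)| ≤ M * x * |x - 0| := this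
  _ = M * x ^ 2 := by rw [sub_zero, abs_of_nonneg hx.1]; ring

lemma lemDCT (lam : ℝ) (f : ℝ → ℝ) (hf : ContDiff ℝ 3 f) :
    Filter.Tendsto
      (fun τ : ℝ => ∫ s in (0:ℝ)..1,
        Real.exp (lam * (τ * (1 - s))) * ((f (τ * s) - f 0 - s * (f τ - f 0)) / τ ^ 2))
      (nhdsWithin 0 (Set.Ioi 0)) (nhds (-(deriv (deriv f) 0) / 12)) := by
  obtain ⟨hd1, hf1⟩ := aux_deriv_facts f hf
  have hc : Continuous f := hf.continuous
  have hcd2 : Continuous (deriv (deriv f)) := by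
    have h := (contDiff_succ_iff_deriv.mp (show ContDiff ℝ (1+1) (deriv f) by norm_num [hf1])).2.2
    exact h.continuous
  obtain ⟨M, hM⟩ : ∃ M, ∀ x ∈ Set.Icc (0:ℝ) 1, |deriv (deriv f) x| ≤ M := by
    obtain ⟨M, hM⟩ := isCompact_Icc.exists_bound_of_continuousOn hcd2.continuousOn
    exact ⟨M, fun x hx => by simpa using hM x hx⟩
  have hM0 : 0 ≤ M := le_trans (abs_nonneg _) (hM 0 (by norm_num))
  have hr := lemR f hf M hM
  set D := deriv (deriv f) 0 with hD
  have key := intervalIntegral.tendsto_integral_filter_of_dominated_convergence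
    (μ := MeasureTheory.volume) (a := (0:ℝ)) (b := 1)
    (l := nhdsWithin (0:ℝ) (Set.Ioi 0))
    (F := fun τ s => Real.exp (lam * (τ * (1 - s))) * ((f (τ * s) - f 0 - s * (f τ - f 0)) / τ ^ 2))
    (f := fun s => D * ((s ^ 2 - s) / 2))
    (bound := fun _ => Real.exp |lam| * (2 * M))
    ?_ ?_ ?_ ?_
  · have hval : ∫ s in (0:ℝ)..1, D * ((s ^ 2 - s) / 2) = -D / 12 := by
      have h2 : ∫ s in (0:ℝ)..1, (s:ℝ) ^ 2 = 1/3 := by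
        rw [integral_pow]; norm_num
      have h1 : ∫ s in (0:ℝ)..1, (s:ℝ) = 1/2 := by
        rw [integral_id]; norm_num
      have hi2 : IntervalIntegrable (fun s : ℝ => s ^ 2) MeasureTheory.volume 0 1 :=
        (continuous_pow 2).intervalIntegrable 0 1
      have hi1 : IntervalIntegrable (fun s : ℝ => s) MeasureTheory.volume 0 1 :=
        (by fun_prop : Continuous fun s : ℝ => s).intervalIntegrable 0 1
      have hsub : ∫ s in (0:ℝ)..1, ((s:ℝ) ^ 2 - s) = 1/3 - 1/2 := by
        rw [intervalIntegral.integral_sub hi2 hi1, h2, h1]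
      have : ∫ s in (0:ℝ)..1, D * ((s ^ 2 - s) / 2) = D * ((∫ s in (0:ℝ)..1, ((s:ℝ)^2 - s)) / 2) := by
        rw [← intervalIntegral.integral_div, ← intervalIntegral.integral_const_mul]
      rw [this, hsub]; ring
    rw [hval] at key
    exact key
  · filter_upwards [self_mem_nhdsWithin] with τ hτ
    have : Continuous (fun s : ℝ =>
        Real.exp (lam * (τ * (1 - s))) * ((f (τ * s) - f 0 - s * (f τ - f 0)) / τ ^ 2)) := by
      fun_prop
    exact this.aestronglyMeasurable
  · filter_upwards [Ioc_mem_nhdsGT_of_mem (Set.left_mem_Ico.mpr one_pos)] with τ hτ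
    refine Filter.Eventually.of_forall fun s hs => ?_
    rw [Set.uIoc_of_le zero_le_one] at hs
    have hτ0 : 0 < τ := hτ.1
    have hτ1 : τ ≤ 1 := hτ.2
    have hs0 : 0 < s := hs.1
    have hs1 : s ≤ 1 := hs.2
    have hkey : f (τ * s) - f 0 - s * (f τ - f 0)
        = (f (τ*s) - f 0 - deriv f 0 * (τ*s)) - s * (f τ - f 0 - deriv f 0 * τ) := by ring
    have hb1 : |f (τ*s) - f 0 - deriv f 0 * (τ*s)| ≤ M * (τ*s)^2 :=
      hr (τ*s) ⟨by positivity, by nlinarith⟩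
    have hb2 : |f τ - f 0 - deriv f 0 * τ| ≤ M * τ^2 := hr τ ⟨le_of_lt hτ0, hτ1⟩
    have hnum : |f (τ * s) - f 0 - s * (f τ - f 0)| ≤ 2 * M * τ^2 := by
      rw [hkey]
      calc |(f (τ*s) - f 0 - deriv f 0 * (τ*s)) - s * (f τ - f 0 - deriv f 0 * τ)|
          ≤ |f (τ*s) - f 0 - deriv f 0 * (τ*s)| + |s * (f τ - f 0 - deriv f 0 * τ)| :=
            abs_sub _ _
        _ ≤ M * (τ*s)^2 + s * (M * τ^2) := by
            rw [abs_mul, abs_of_nonneg (le_of_lt hs0)]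
            exact add_le_add hb1 (mul_le_mul_of_nonneg_left hb2 (le_of_lt hs0))
        _ ≤ 2 * M * τ^2 := by
            have hs2 : s^2 ≤ 1 := by nlinarith
            nlinarith [mul_le_mul_of_nonneg_left hs2 (mul_nonneg hM0 (sq_nonneg τ)),
              mul_le_mul_of_nonneg_left hs1 (mul_nonneg hM0 (sq_nonneg τ))]
    have hexp : Real.exp (lam * (τ * (1 - s))) ≤ Real.exp |lam| := by
      apply Real.exp_le_exp.mpr
      calc lam * (τ * (1 - s)) ≤ |lam * (τ * (1 - s))| := le_abs_self _
        _ = |lam| * |τ * (1 - s)| := abs_mul _ _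
        _ ≤ |lam| * 1 := by
            apply mul_le_mul_of_nonneg_left _ (abs_nonneg _)
            rw [abs_of_nonneg (by nlinarith : (0:ℝ) ≤ τ * (1 - s))]
            nlinarith
        _ = |lam| := mul_one _
    rw [Real.norm_eq_abs, abs_mul, abs_div, abs_of_pos (Real.exp_pos _)]
    have h2 : |f (τ * s) - f 0 - s * (f τ - f 0)| / |τ ^ 2| ≤ 2 * M := by
      rw [abs_of_pos (by positivity : (0:ℝ) < τ^2), div_le_iff₀ (by positivity)]
      nlinarith
    exact mul_le_mul hexp h2 (by positivity) (le_of_lt (Real.exp_pos _))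
  · exact intervalIntegrable_const
  · refine Filter.Eventually.of_forall fun s hs => ?_
    rw [Set.uIoc_of_le zero_le_one] at hs
    have hs0 : 0 < s := hs.1
    have hQ := lemA f hf
    have hmap : Filter.Tendsto (fun τ : ℝ => τ * s) (nhdsWithin 0 (Set.Ioi 0))
        (nhdsWithin 0 (Set.Ioi 0)) := by
      rw [tendsto_nhdsWithin_iff]
      constructor
      · have : Filter.Tendsto (fun τ : ℝ => τ * s) (nhds 0) (nhds (0 * s)) :=
          (continuous_mul_right s).tendsto 0
        simpa using this.mono_left nhdsWithin_le_nhds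
      · filter_upwards [self_mem_nhdsWithin] with τ (hτ : τ ∈ Set.Ioi 0)
        exact Set.mem_Ioi.mpr (mul_pos hτ hs0)
    have hQ1 := hQ.comp hmap
    have hE : Filter.Tendsto (fun τ : ℝ => Real.exp (lam * (τ * (1 - s))))
        (nhdsWithin 0 (Set.Ioi 0)) (nhds 1) := by
      have : Filter.Tendsto (fun τ : ℝ => Real.exp (lam * (τ * (1 - s)))) (nhds 0)
          (nhds (Real.exp (lam * (0 * (1 - s))))) := by
        exact (Real.continuous_exp.comp (by fun_prop)).tendsto 0
      simpa using this.mono_left nhdsWithin_le_nhds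
    have combined := hE.mul ((hQ1.const_mul (s^2)).sub (hQ.const_mul s))
    have hval : (fun s : ℝ => D * ((s ^ 2 - s) / 2)) s = 1 * (s^2 * (D / 2) - s * (D / 2)) := by
      show D * ((s ^ 2 - s) / 2) = _; ring
    rw [show D * ((s ^ 2 - s) / 2) = 1 * (s^2 * (D / 2) - s * (D / 2)) from hval]
    apply combined.congr'
    filter_upwards [self_mem_nhdsWithin] with τ (hτ : τ ∈ Set.Ioi 0)
    have hτ0 : (0:ℝ) < τ := hτ
    show Real.exp (lam * (τ * (1 - s))) *
        (s^2 * ((f (τ*s) - f 0 - deriv f 0 * (τ*s)) / (τ*s)^2)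
          - s * ((f τ - f 0 - deriv f 0 * τ) / τ^2)) = _
    congr 1
    field_simp
    ring

/-- local error of the ETD2RK scheme: for the scalar problem
`u' = λu + f(t)`, `u(0) = u₀`, with `f` three times continuously differentiable,
the exact solution `u(τ) = e^{λτ}u₀ + ∫₀^τ e^{λ(τ−t)} f(t) dt` and the result
`u_sch(τ) = e^{λτ}u₀ + m₁(τ)f(0) + τ⁻¹ m₂(τ)(f(τ) − f(0))` of one ETD2RK step,
where `m₁(τ) = ∫₀^τ e^{λ(τ−t)} dt` and `m₂(τ) = ∫₀^τ e^{λ(τ−t)} t dt`, satisfy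
`lim_{τ→0⁺} (u(τ) − u_sch(τ))/τ³ = −f''(0)/12`. -/
theorem etd2rk_local_error (lam u₀ : ℝ) (f : ℝ → ℝ) (hf : ContDiff ℝ 3 f) :
    Filter.Tendsto
      (fun τ : ℝ =>
        ((Real.exp (lam * τ) * u₀ + ∫ t in (0:ℝ)..τ, Real.exp (lam * (τ - t)) * f t)
          - ((Real.exp (lam * τ) * u₀ + (∫ t in (0:ℝ)..τ, Real.exp (lam * (τ - t))) * f 0)
            + τ⁻¹ * (∫ t in (0:ℝ)..τ, Real.exp (lam * (τ - t)) * t) * (f τ - f 0)))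
          / τ ^ 3)
      (nhdsWithin 0 (Set.Ioi 0)) (nhds (-(deriv (deriv f) 0) / 12)) := by
  have hc : Continuous f := hf.continuous
  apply Filter.Tendsto.congr' _ (lemDCT lam f hf)
  filter_upwards [self_mem_nhdsWithin] with τ (hτ : τ ∈ Set.Ioi 0)
  have hτ0 : (0:ℝ) < τ := hτ
  have hτne : τ ≠ 0 := ne_of_gt hτ0
  set Δ := f τ - f 0 with hΔ
  have hec : Continuous fun t : ℝ => Real.exp (lam * (τ - t)) := by fun_prop
  have hi1 : IntervalIntegrable (fun t => Real.exp (lam * (τ - t)) * f t)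
      MeasureTheory.volume 0 τ := (hec.mul hc).intervalIntegrable 0 τ
  have hi2 : IntervalIntegrable (fun t => Real.exp (lam * (τ - t)) * f 0)
      MeasureTheory.volume 0 τ := (hec.mul continuous_const).intervalIntegrable 0 τ
  have hi3 : IntervalIntegrable (fun t => τ⁻¹ * Δ * (Real.exp (lam * (τ - t)) * t))
      MeasureTheory.volume 0 τ := by
    apply Continuous.intervalIntegrable; fun_prop
  set g : ℝ → ℝ := fun t => Real.exp (lam * (τ - t)) * (f t - f 0 - τ⁻¹ * Δ * t) with hg
  have hcomb : (∫ t in (0:ℝ)..τ, Real.exp (lam * (τ - t)) * f t)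
      - (∫ t in (0:ℝ)..τ, Real.exp (lam * (τ - t))) * f 0
      - τ⁻¹ * (∫ t in (0:ℝ)..τ, Real.exp (lam * (τ - t)) * t) * Δ
      = ∫ t in (0:ℝ)..τ, g t := by
    have heq : ∀ t : ℝ, g t = Real.exp (lam * (τ - t)) * f t
        - Real.exp (lam * (τ - t)) * f 0 - τ⁻¹ * Δ * (Real.exp (lam * (τ - t)) * t) := by
      intro t; simp only [hg]; ring
    rw [intervalIntegral.integral_congr (fun t _ => heq t)]
    rw [intervalIntegral.integral_sub (hi1.sub hi2) hi3, intervalIntegral.integral_sub hi1 hi2,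
      intervalIntegral.integral_const_mul, ← intervalIntegral.integral_mul_const]
    ring
  have hsubst : ∫ t in (0:ℝ)..τ, g t = τ * ∫ s in (0:ℝ)..1, g (τ * s) := by
    have := intervalIntegral.smul_integral_comp_mul_left (a := (0:ℝ)) (b := 1) g τ
    simp only [smul_eq_mul, mul_zero, mul_one] at this
    rw [← this]
  have hFeq : ∀ s : ℝ, g (τ * s)
      = τ ^ 2 * (Real.exp (lam * (τ * (1 - s))) * ((f (τ * s) - f 0 - s * Δ) / τ ^ 2)) := by
    intro s
    have h1 : lam * (τ - τ * s) = lam * (τ * (1 - s)) := by ring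
    have h2 : τ⁻¹ * Δ * (τ * s) = s * Δ := by field_simp
    simp only [hg, h1, h2]
    field_simp
  have hint2 : ∫ s in (0:ℝ)..1, g (τ * s)
      = τ ^ 2 * ∫ s in (0:ℝ)..1,
          Real.exp (lam * (τ * (1 - s))) * ((f (τ * s) - f 0 - s * Δ) / τ ^ 2) := by
    rw [intervalIntegral.integral_congr (fun s _ => hFeq s),
      intervalIntegral.integral_const_mul]
  show (∫ s in (0:ℝ)..1, Real.exp (lam * (τ * (1 - s))) * ((f (τ * s) - f 0 - s * Δ) / τ ^ 2)) = _
  have : (Real.exp (lam * τ) * u₀ + ∫ t in (0:ℝ)..τ, Real.exp (lam * (τ - t)) * f t)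
          - ((Real.exp (lam * τ) * u₀ + (∫ t in (0:ℝ)..τ, Real.exp (lam * (τ - t))) * f 0)
            + τ⁻¹ * (∫ t in (0:ℝ)..τ, Real.exp (lam * (τ - t)) * t) * Δ)
      = (∫ t in (0:ℝ)..τ, Real.exp (lam * (τ - t)) * f t)
      - (∫ t in (0:ℝ)..τ, Real.exp (lam * (τ - t))) * f 0
      - τ⁻¹ * (∫ t in (0:ℝ)..τ, Real.exp (lam * (τ - t)) * t) * Δ := by ring
  rw [this, hcomb, hsubst, hint2]
  field_simp
  ring_nf
  congr 1
  ext s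
  ring
end
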